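/- Let α_n be the effective resistance across the first rung of the ladder graph P_2 □ P_n (i.e., between vertices (1,1) and (2,1)). Then α_1 = 1 and for all n ≥ 1, α_{n+1} = (α_n + 2)/(α_n + 3). -/

import Mathlib

open Classical Matrix

/-- The four Penrose conditions characterizing the Moore–Penrose pseudoinverse
of a real square matrix. -/
def IsMoorePenroseInverse {V : Type*} [Fintype V] [DecidableEq V]
    (L P : Matrix V V ℝ) : Prop :=
  L * P * L = L ∧ P * L * P = P ∧ (L * P)ᵀ = L * P ∧ (P * L)ᵀ = P * L

/-- The Moore–Penrose pseudoinverse of a real square matrix. -/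
noncomputable def pinv {V : Type*} [Fintype V] [DecidableEq V]
    (L : Matrix V V ℝ) : Matrix V V ℝ :=
  if h : ∃ P, IsMoorePenroseInverse L P then h.choose else 0

/-- Effective resistance between `x` and `y` computed from a (weighted) Laplacian `L`. -/
noncomputable def effResM {V : Type*} [Fintype V] [DecidableEq V]
    (L : Matrix V V ℝ) (x y : V) : ℝ :=
  pinv L x x + pinv L y y - 2 * pinv L x y

/-- Effective resistance between vertices `x` and `y` of a simple graph `G`. -/
noncomputable def effRes {V : Type*} [Fintype V] [DecidableEq V]
    (G : SimpleGraph V) (x y : V) : ℝ :=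
  effResM (G.lapMatrix ℝ) x y

/-- The node resistance curvature `p_x = 1 - (1/2) ∑_{y ~ x} ω_{x,y}`. -/
noncomputable def curv {V : Type*} [Fintype V] [DecidableEq V]
    (G : SimpleGraph V) (x : V) : ℝ :=
  1 - (1/2) * ∑ y : V, if G.Adj x y then effRes G x y else 0

/-- The grid graph `P_m □ P_n` (vertex `(i,j)` of the paper corresponds to
`(⟨i-1⟩, ⟨j-1⟩) : Fin m × Fin n`). -/
def grid (m n : ℕ) : SimpleGraph (Fin m × Fin n) :=
  (SimpleGraph.pathGraph m).boxProd (SimpleGraph.pathGraph n)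

/-- The ladder graph `P_2 □ P_n` (vertex `(i,k)` of the paper corresponds to
`(⟨i-1⟩, ⟨k-1⟩) : Fin 2 × Fin n`). -/
def ladder (n : ℕ) : SimpleGraph (Fin 2 × Fin n) :=
  (SimpleGraph.pathGraph 2).boxProd (SimpleGraph.pathGraph n)

/-- `α_n`, the effective resistance across the first rung of the ladder `P_2 □ P_n`,
i.e. between the vertices `(1,1)` and `(2,1)` of the paper (junk value `0` for `n = 0`). -/
noncomputable def alpha (n : ℕ) : ℝ :=
  if h : 0 < n then effRes (ladder n) (0, ⟨0, h⟩) (1, ⟨0, h⟩) else 0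



lemma diag_ddd (V : Type*) [Fintype V] [DecidableEq V] (d : V → ℝ) :
    diagonal d * diagonal (fun i => (d i)⁻¹) * diagonal d = diagonal d := by
  simp only [diagonal_mul_diagonal]
  ext i
  by_cases h : d i = 0 <;> field_simp [h]

lemma diag_dd (V : Type*) [Fintype V] [DecidableEq V] (d : V → ℝ) :
    diagonal (fun i => (d i)⁻¹) * diagonal d * diagonal (fun i => (d i)⁻¹)
      = diagonal (fun i => (d i)⁻¹) := by
  simp only [diagonal_mul_diagonal]
  ext i
  by_cases h : d i = 0 <;> field_simp [h]

lemma exists_mp {V : Type*} [Fintype V] [DecidableEq V] (A : Matrix V V ℝ)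
    (hA : A.IsHermitian) : ∃ P, IsMoorePenroseInverse A P := by
  classical
  set U : Matrix V V ℝ := (hA.eigenvectorUnitary : Matrix V V ℝ) with hU
  set d : V → ℝ := hA.eigenvalues with hd
  have hUU : star U * U = 1 := (Matrix.mem_unitaryGroup_iff').mp hA.eigenvectorUnitary.2
  have hUU' : U * star U = 1 := (Matrix.mem_unitaryGroup_iff).mp hA.eigenvectorUnitary.2
  have hstar : star U = Uᵀ := by
    ext i j; simp [Matrix.star_apply]
  have hspec : A = U * diagonal d * star U := by
    have := hA.spectral_theorem
    simpa using this
  have key : ∀ D E F : Matrix V V ℝ,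
      (U * D * star U) * (U * E * star U) * (U * F * star U) = U * (D * E * F) * star U := by
    intro D E F
    calc (U * D * star U) * (U * E * star U) * (U * F * star U)
        = U * (D * ((star U * U) * (E * ((star U * U) * F)))) * star U := by
          simp only [Matrix.mul_assoc]
      _ = U * (D * E * F) * star U := by rw [hUU]; simp [Matrix.mul_assoc]
  have sym : ∀ D : Matrix V V ℝ, Dᵀ = D → (U * D * star U)ᵀ = U * D * star U := by
    intro D hD
    rw [Matrix.transpose_mul, Matrix.transpose_mul, hstar, Matrix.transpose_transpose, hD,
      Matrix.mul_assoc]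
  have key2 : ∀ D E : Matrix V V ℝ,
      (U * D * star U) * (U * E * star U) = U * (D * E) * star U := by
    intro D E
    calc (U * D * star U) * (U * E * star U)
        = U * (D * ((star U * U) * E)) * star U := by simp only [Matrix.mul_assoc]
      _ = U * (D * E) * star U := by rw [hUU]; simp [Matrix.mul_assoc]
  refine ⟨U * diagonal (fun i => (d i)⁻¹) * star U, ?_, ?_, ?_, ?_⟩
  · rw [hspec, key, diag_ddd]
  · rw [hspec, key, diag_dd]
  · rw [hspec, key2]
    exact sym _ (by simp [diagonal_mul_diagonal, Matrix.diagonal_transpose])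
  · rw [hspec, key2]
    exact sym _ (by simp [diagonal_mul_diagonal, Matrix.diagonal_transpose])

lemma mp_LP_eq {V : Type*} [Fintype V] [DecidableEq V] {L P Q : Matrix V V ℝ}
    (hP : IsMoorePenroseInverse L P) (hQ : IsMoorePenroseInverse L Q) : L * P = L * Q := by
  obtain ⟨hP1, hP2, hP3, hP4⟩ := hP
  obtain ⟨hQ1, hQ2, hQ3, hQ4⟩ := hQ
  calc L * P = (L * P)ᵀ := hP3.symm
    _ = Pᵀ * Lᵀ := by rw [Matrix.transpose_mul]
    _ = Pᵀ * (L * Q * L)ᵀ := by rw [hQ1]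
    _ = Pᵀ * (Lᵀ * (L * Q)ᵀ) := by rw [Matrix.transpose_mul]
    _ = Pᵀ * Lᵀ * (L * Q) := by rw [hQ3, Matrix.mul_assoc]
    _ = (L * P)ᵀ * (L * Q) := by rw [Matrix.transpose_mul]
    _ = L * P * (L * Q) := by rw [hP3]
    _ = L * P * L * Q := by rw [← Matrix.mul_assoc]
    _ = L * Q := by rw [hP1]

lemma mp_transpose {V : Type*} [Fintype V] [DecidableEq V] {L P : Matrix V V ℝ}
    (h : IsMoorePenroseInverse L P) : IsMoorePenroseInverse Lᵀ Pᵀ := by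
  obtain ⟨h1, h2, h3, h4⟩ := h
  refine ⟨?_, ?_, ?_, ?_⟩
  · have := congrArg Matrix.transpose h1
    simpa [Matrix.transpose_mul, Matrix.mul_assoc] using this
  · have := congrArg Matrix.transpose h2
    simpa [Matrix.transpose_mul, Matrix.mul_assoc] using this
  · rw [← Matrix.transpose_mul, Matrix.transpose_transpose, ← h4, Matrix.transpose_transpose, h4]
  · rw [← Matrix.transpose_mul, Matrix.transpose_transpose, ← h3, Matrix.transpose_transpose, h3]

lemma mp_unique {V : Type*} [Fintype V] [DecidableEq V] {L P Q : Matrix V V ℝ}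
    (hP : IsMoorePenroseInverse L P) (hQ : IsMoorePenroseInverse L Q) : P = Q := by
  have hLP : L * P = L * Q := mp_LP_eq hP hQ
  have hPL : P * L = Q * L := by
    have := mp_LP_eq (mp_transpose hP) (mp_transpose hQ)
    have := congrArg Matrix.transpose this
    simpa using this
  calc P = P * L * P := hP.2.1.symm
    _ = Q * L * P := by rw [hPL]
    _ = Q * (L * P) := by rw [Matrix.mul_assoc]
    _ = Q * (L * Q) := by rw [hLP]
    _ = Q * L * Q := by rw [Matrix.mul_assoc]
    _ = Q := hQ.2.1

lemma pinv_spec {V : Type*} [Fintype V] [DecidableEq V] {L : Matrix V V ℝ}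
    (h : ∃ P, IsMoorePenroseInverse L P) : IsMoorePenroseInverse L (pinv L) := by
  rw [pinv, dif_pos h]; exact h.choose_spec

lemma pinv_symm {V : Type*} [Fintype V] [DecidableEq V] {L : Matrix V V ℝ}
    (hs : Lᵀ = L) (h : ∃ P, IsMoorePenroseInverse L P) : (pinv L)ᵀ = pinv L := by
  have h1 := pinv_spec h
  have h2 := mp_transpose h1
  rw [hs] at h2
  exact mp_unique h2 h1

lemma effResM_eq {V : Type*} [Fintype V] [DecidableEq V] {L : Matrix V V ℝ}
    (hs : Lᵀ = L) (hex : ∃ P, IsMoorePenroseInverse L P) {x y : V} (f : V → ℝ)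
    (hf : L *ᵥ f = Pi.single x 1 - Pi.single y 1) :
    effResM L x y = f x - f y := by
  have hP := pinv_spec hex
  have hPs := pinv_symm hs hex
  set b : V → ℝ := Pi.single x 1 - Pi.single y 1 with hb
  have e1 : b ⬝ᵥ (pinv L *ᵥ b) = effResM L x y := by
    rw [hb]
    simp only [Matrix.mulVec_sub, Matrix.mulVec_single_one, sub_dotProduct,
      single_dotProduct, dotProduct_sub, mul_one, Pi.sub_apply, one_mul, Matrix.col_apply]
    have hxy : pinv L x y = pinv L y x := by
      conv_lhs => rw [← hPs]
      rw [Matrix.transpose_apply]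
    rw [effResM, hxy]
    ring
  have hvm : f ᵥ* L = L *ᵥ f := by
    conv_lhs => rw [← hs]
    rw [Matrix.vecMul_transpose]
  have e2 : b ⬝ᵥ (pinv L *ᵥ b) = f x - f y := by
    conv_lhs => rw [← hf, Matrix.mulVec_mulVec, Matrix.dotProduct_mulVec, ← hvm,
      Matrix.vecMul_vecMul, ← Matrix.mul_assoc, hP.1, hvm, hf]
    rw [hb]
    simp [sub_dotProduct, single_dotProduct]
  rw [← e1, e2]


noncomputable def hseq : ℕ → ℝ
  | 0 => 1
  | 1 => 3
  | (n+2) => 4 * hseq (n+1) - hseq n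

lemma hseq_zero : hseq 0 = 1 := rfl
lemma hseq_one : hseq 1 = 3 := rfl
lemma hseq_rec (n : ℕ) : hseq (n+2) = 4 * hseq (n+1) - hseq n := rfl

lemma hseq_pos_lt (n : ℕ) : 0 < hseq n ∧ hseq n < hseq (n+1) := by
  induction n with
  | zero => norm_num [hseq_zero, hseq_one]
  | succ m ih =>
    obtain ⟨h1, h2⟩ := ih
    refine ⟨by linarith, ?_⟩
    rw [hseq_rec]
    linarith

lemma ladder_adj {n : ℕ} (v w : Fin 2 × Fin n) :
    (ladder n).Adj v w ↔ (v.1 ≠ w.1 ∧ v.2 = w.2) ∨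
      (v.1 = w.1 ∧ (v.2.val + 1 = w.2.val ∨ w.2.val + 1 = v.2.val)) := by
  rw [ladder, SimpleGraph.boxProd_adj, SimpleGraph.pathGraph_two_eq_top,
    SimpleGraph.pathGraph_adj]
  simp [SimpleGraph.top_adj, and_comm]

lemma sumFin {n : ℕ} (G : ℕ → ℝ) (m : ℕ) :
    ∑ l : Fin n, (if m = l.val then G l.val else 0) = if m < n then G m else 0 := by
  by_cases h : m < n
  · rw [if_pos h, Finset.sum_eq_single (⟨m, h⟩ : Fin n)]
    · simp
    · intro b _ hb
      rw [if_neg]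
      intro hc
      exact hb (by ext; simp [← hc])
    · simp
  · rw [if_neg h]
    apply Finset.sum_eq_zero
    intro l _
    rw [if_neg]
    intro hc
    exact h (hc ▸ l.isLt)

lemma sum_fin_two (f : Fin 2 → ℝ) (i : Fin 2) : ∑ j, f j = f i + f (i + 1) := by
  fin_cases i <;> simp [Fin.sum_univ_two] <;> ring

lemma ladder_nbr_sum {n : ℕ} (F : Fin 2 → ℕ → ℝ) (i : Fin 2) (k : Fin n) :
    ∑ u ∈ (ladder n).neighborFinset (i, k), F u.1 u.2.val
      = F (i + 1) k.val + (if k.val + 1 < n then F i (k.val + 1) else 0)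
        + (if 1 ≤ k.val then F i (k.val - 1) else 0) := by
  have hne : i + 1 ≠ i := by fin_cases i <;> decide
  rw [SimpleGraph.neighborFinset_eq_filter, Finset.sum_filter, Fintype.sum_prod_type,
    sum_fin_two _ i]
  have other : ∀ j : Fin 2, j ≠ i → (∑ l : Fin n, if (ladder n).Adj (i,k) (j,l)
      then F j l.val else 0) = F (i+1) k.val := by
    intro j hj
    have : ∀ l : Fin n, ((ladder n).Adj (i,k) (j,l) ↔ k = l) := by
      intro l
      rw [ladder_adj]
      simp only []
      constructor
      · rintro (⟨-, h⟩ | ⟨h, -⟩)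
        · exact h
        · exact absurd h.symm hj
      · intro h
        exact Or.inl ⟨fun hh => hj hh.symm, h⟩
    simp only [this]
    have hj1 : j = i + 1 := by omega
    subst hj1
    rw [show (∑ l : Fin n, if k = l then F (i+1) l.val else 0)
        = ∑ l : Fin n, if k.val = l.val then F (i+1) l.val else 0 by
      apply Finset.sum_congr rfl; intro l _; congr 1; simp [Fin.ext_iff], sumFin]
    simp [k.isLt]
  have same : (∑ l : Fin n, if (ladder n).Adj (i,k) (i,l) then F i l.val else 0)
      = (if k.val + 1 < n then F i (k.val + 1) else 0)
        + (if 1 ≤ k.val then F i (k.val - 1) else 0) := by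
    have : ∀ l : Fin n, ((ladder n).Adj (i,k) (i,l) ↔ (k.val + 1 = l.val ∨ l.val + 1 = k.val)) := by
      intro l
      rw [ladder_adj]
      simp
    simp only [this]
    have split : ∀ l : Fin n, (if (k.val + 1 = l.val ∨ l.val + 1 = k.val) then F i l.val else 0)
        = (if k.val + 1 = l.val then F i l.val else 0)
          + (if l.val + 1 = k.val then F i l.val else 0) := by
      intro l
      by_cases h1 : k.val + 1 = l.val <;> by_cases h2 : l.val + 1 = k.val <;>
        simp [h1, h2] <;> omega
    rw [Finset.sum_congr rfl (fun l _ => split l), Finset.sum_add_distrib, sumFin]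
    congr 1
    have key : ∀ l : Fin n, (if l.val + 1 = k.val then F i l.val else 0)
        = (if k.val - 1 = l.val then (if 1 ≤ k.val then F i l.val else 0) else 0) := by
      intro l
      by_cases h : l.val + 1 = k.val
      · rw [if_pos h, if_pos (by omega), if_pos (by omega)]
      · rw [if_neg h]
        by_cases hk : k.val - 1 = l.val
        · rw [if_pos hk, if_neg (by omega)]
        · rw [if_neg hk]
    rw [Finset.sum_congr rfl (fun l _ => key l)]
    rw [show (∑ l : Fin n, if k.val - 1 = l.val then (if 1 ≤ k.val then F i l.val else 0) else 0)
        = if k.val - 1 < n then (if 1 ≤ k.val then F i (k.val - 1) else 0) else 0 from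
      sumFin (fun m => if 1 ≤ k.val then F i m else 0) (k.val - 1)]
    rw [if_pos (by omega)]
  rw [same, other (i + 1) hne]
  ring

lemma ladder_degree {n : ℕ} (i : Fin 2) (k : Fin n) :
    (((ladder n).degree (i, k) : ℕ) : ℝ)
      = 1 + (if k.val + 1 < n then 1 else 0) + (if 1 ≤ k.val then 1 else 0) := by
  have h := ladder_nbr_sum (fun _ _ => (1:ℝ)) i k
  rw [SimpleGraph.degree, Finset.card_eq_sum_ones, Nat.cast_sum]
  simpa using h

noncomputable def eRow : Fin 2 → ℝ := fun j => if j = 0 then 1 else -1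

noncomputable def Gcol (n m : ℕ) : ℝ := hseq (n - 1 - m) / (hseq n - hseq (n - 1))

lemma ladder_lap (n : ℕ) (hn : 0 < n) :
    (ladder n).lapMatrix ℝ *ᵥ (fun u => eRow u.1 * Gcol n u.2.val)
      = Pi.single ((0, ⟨0, hn⟩) : Fin 2 × Fin n) 1 - Pi.single (1, ⟨0, hn⟩) 1 := by
  have hn1 : n - 1 + 1 = n := by omega
  have hDpos : 0 < hseq n - hseq (n - 1) := by
    have := (hseq_pos_lt (n - 1)).2
    rw [hn1] at this
    linarith
  have hDne : hseq n - hseq (n - 1) ≠ 0 := ne_of_gt hDpos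
  have hpos : ∀ m, 0 < hseq m := fun m => (hseq_pos_lt m).1
  ext ⟨i, k⟩
  rw [SimpleGraph.lapMatrix_mulVec_apply]
  have hsum := ladder_nbr_sum (fun j m => eRow j * Gcol n m) i k
  simp only [] at hsum ⊢
  rw [hsum, ladder_degree]
  have hei : eRow (i + 1) = - eRow i := by fin_cases i <;> simp [eRow]
  rw [hei]
  have hRHS : ((Pi.single ((0, ⟨0, hn⟩) : Fin 2 × Fin n) (1:ℝ)
        - Pi.single ((1, ⟨0, hn⟩) : Fin 2 × Fin n) (1:ℝ)) : Fin 2 × Fin n → ℝ) (i, k)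
      = (if k.val = 0 then eRow i else 0) := by
    fin_cases i
    · simp [Pi.single_apply, Prod.ext_iff, Fin.ext_iff, eRow, eq_comm]
    · simp [Pi.single_apply, Prod.ext_iff, Fin.ext_iff, eRow, eq_comm]
      split_ifs <;> norm_num
  rw [hRHS]
  rcases k with ⟨kv, hkv⟩
  simp only [Fin.val_mk]
  split_ifs with hA hB hC hC2 hB2 hC3 hC4
  · omega
  · -- interior
    have e0 : n - 1 - (kv - 1) = (n - 2 - kv) + 2 := by omega
    have e1 : n - 1 - kv = (n - 2 - kv) + 1 := by omega
    have e2 : n - 1 - (kv + 1) = n - 2 - kv := by omega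
    have hrec := hseq_rec (n - 2 - kv)
    have hGk : Gcol n kv = hseq ((n - 2 - kv) + 1) / (hseq n - hseq (n - 1)) := by
      unfold Gcol; rw [e1]
    have hGk1 : Gcol n (kv + 1) = hseq (n - 2 - kv) / (hseq n - hseq (n - 1)) := by
      unfold Gcol; rw [e2]
    have hGk0 : Gcol n (kv - 1) = hseq ((n - 2 - kv) + 2) / (hseq n - hseq (n - 1)) := by
      unfold Gcol; rw [e0]
    rw [hGk, hGk1, hGk0, hrec]
    field_simp
    ring
  · -- first column, n ≥ 2
    have e1 : n - 2 + 2 = n := by omega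
    have e2 : n - 2 + 1 = n - 1 := by omega
    have hrec := hseq_rec (n - 2)
    rw [e1, e2] at hrec
    have hGk : Gcol n kv = hseq (n - 1) / (hseq n - hseq (n - 1)) := by
      unfold Gcol; rw [show n - 1 - kv = n - 1 by omega]
    have hGk1 : Gcol n (kv + 1) = hseq (n - 2) / (hseq n - hseq (n - 1)) := by
      unfold Gcol; rw [show n - 1 - (kv + 1) = n - 2 by omega]
    rw [hGk, hGk1,
      show hseq (n - 2) = 3 * hseq (n - 1) - (hseq n - hseq (n - 1)) by linarith]
    field_simp
    ring
  · omega
  · omega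
  · -- last column
    have e1 : n - 1 - kv = 0 := by omega
    have e0 : n - 1 - (kv - 1) = 1 := by omega
    have hGk : Gcol n kv = 1 / (hseq n - hseq (n - 1)) := by
      unfold Gcol; rw [e1, hseq_zero]
    have hGk0 : Gcol n (kv - 1) = 3 / (hseq n - hseq (n - 1)) := by
      unfold Gcol; rw [e0, hseq_one]
    rw [hGk, hGk0]
    field_simp
    ring
  · -- n = 1
    have hne : n = 1 := by omega
    subst hne
    have hGk : Gcol 1 kv = 1 / 2 := by
      unfold Gcol
      rw [show 1 - 1 - kv = 0 by omega, hseq_zero, hseq_one]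
      norm_num
    rw [hGk]
    ring
  · omega

lemma alpha_formula (n : ℕ) (hn : 0 < n) :
    alpha n = 2 * (hseq (n - 1) / (hseq n - hseq (n - 1))) := by
  rw [alpha, dif_pos hn, effRes]
  have hs : ((ladder n).lapMatrix ℝ)ᵀ = (ladder n).lapMatrix ℝ :=
    SimpleGraph.isSymm_lapMatrix (R := ℝ) (G := ladder n)
  have hex : ∃ P, IsMoorePenroseInverse ((ladder n).lapMatrix ℝ) P :=
    exists_mp _ (SimpleGraph.posSemidef_lapMatrix (R := ℝ) (G := ladder n)).1
  rw [effResM_eq hs hex (fun u => eRow u.1 * Gcol n u.2.val) (ladder_lap n hn)]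
  have h0 : eRow 0 = 1 := by simp [eRow]
  have h1 : eRow 1 = -1 := by simp [eRow]
  simp only [h0, h1]
  unfold Gcol
  simp only [Fin.val_mk, Nat.sub_zero]
  ring

theorem alpha_one_and_rec :
    alpha 1 = 1 ∧ ∀ n : ℕ, 1 ≤ n → alpha (n + 1) = (alpha n + 2) / (alpha n + 3) := by
  constructor
  · rw [alpha_formula 1 one_pos]
    norm_num [hseq_zero, hseq_one]
  · intro n hn
    have hc : hseq (n + 1) = 4 * hseq n - hseq (n - 1) := by
      have h := hseq_rec (n - 1)
      rw [show n - 1 + 2 = n + 1 by omega, show n - 1 + 1 = n by omega] at h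
      exact h
    have hpos : ∀ m, 0 < hseq m := fun m => (hseq_pos_lt m).1
    have hab : hseq (n - 1) < hseq n := by
      have := (hseq_pos_lt (n - 1)).2
      rwa [show n - 1 + 1 = n by omega] at this
    have hbc : hseq n < hseq (n + 1) := (hseq_pos_lt n).2
    have h1 : hseq n - hseq (n - 1) ≠ 0 := by linarith
    have h2 : hseq (n + 1) - hseq n ≠ 0 := by linarith
    have h3 : 2 * (hseq (n - 1) / (hseq n - hseq (n - 1))) + 3 ≠ 0 := by
      have ha := hpos (n - 1)
      have : 0 < hseq (n - 1) / (hseq n - hseq (n - 1)) := by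
        apply div_pos ha
        linarith
      linarith
    rw [alpha_formula (n + 1) (by omega), alpha_formula n (by omega),
      show n + 1 - 1 = n from rfl]
    simp only [← mul_div_assoc]
    rw [div_add' _ _ _ h1, div_add' _ _ _ h1, div_div_div_cancel_right₀ h1]
    rw [hc]
    have h4 : 2 * hseq (n - 1) + 3 * (hseq n - hseq (n - 1)) ≠ 0 := by
      have := hpos (n - 1); have := hpos n
      nlinarith
    rw [div_eq_div_iff (by rw [← hc]; linarith) h4]
    ring
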